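/- With T = (1 + ∑_{k=1}^K μ_k T_{s,k}) / (∑_k μ_k), γ = α/(α+β) ∈ (0,1), and -T_{0,l} := (1 - 1/γ) T + T_{s,l}/γ, the function F_l^*(t) := γ μ_l (t + T_{0,l}) satisfies F_l^*(-T_{0,l}) = 0 and F_l^*(T) = μ_l (T - T_{s,l}), and the cost C_l(t) := (α+β)(F_l^*(t)/μ_l + T_{s,l}) - α t is constant on [-T_{0,l}, T], equal to β T. -/

import Mathlib

open Finset Set

/-- The equilibrium arrival profile `F_l^*(t) = γ μ_l (t + T_{0,l})`
vanishes at the first arrival time `-T_{0,l}`, equals the served mass `μ_l (T - Ts l)`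
at `T`, and the cost `C_l` is constant (equal to `β T`) on `[-T_{0,l}, T]`. -/
theorem equilibrium_profile_equal_cost
    (K : ℕ) (hK : 0 < K) (μ Ts : Fin K → ℝ) (hμ : ∀ k, 0 < μ k)
    (α β : ℝ) (hα : 0 < α) (hβ : 0 < β)
    (γ : ℝ) (hγ : γ = α / (α + β))
    (T : ℝ) (hT : T = (1 + ∑ k, μ k * Ts k) / (∑ k, μ k))
    (l : Fin K)
    (T0l : ℝ) (hT0l : -T0l = (1 - 1 / γ) * T + Ts l / γ)
    (Fl : ℝ → ℝ) (hFl : ∀ t, Fl t = γ * μ l * (t + T0l))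
    (Cl : ℝ → ℝ) (hCl : ∀ t, Cl t = (α + β) * (Fl t / μ l + Ts l) - α * t) :
    Fl (-T0l) = 0 ∧ Fl T = μ l * (T - Ts l) ∧
    ∀ t ∈ Set.Icc (-T0l) T, Cl t = β * T := by
  have hab : α + β ≠ 0 := by positivity
  have hγpos : 0 < γ := by rw [hγ]; positivity
  have hγne : γ ≠ 0 := ne_of_gt hγpos
  have hμl : (μ l : ℝ) ≠ 0 := ne_of_gt (hμ l)
  -- key: T + T0l = (T - Ts l)/γ
  have hkey : T + T0l = (T - Ts l) / γ := by
    have := hT0l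
    field_simp at this ⊢
    linarith
  refine ⟨by rw [hFl]; ring, ?_, ?_⟩
  · rw [hFl, hkey]; field_simp
  · intro t ht
    rw [hCl, hFl]
    have h1 : (α + β) * (γ * μ l * (t + T0l) / μ l + Ts l) - α * t
        = α * T0l + (α + β) * Ts l := by
      field_simp
      rw [hγ]; field_simp; ring
    rw [h1]
    have h2 : -γ * T0l = (γ - 1) * T + Ts l := by
      have := hT0l
      field_simp at this
      linarith
    rw [hγ] at h2
    field_simp at h2
    have h2' : (-(α * T0l)) * (α + β) = (-(β * T) + Ts l * (α + β)) * (α + β) := by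
      linear_combination (α + β) * h2
    have h3 := mul_right_cancel₀ hab h2'
    linarith
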